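/- Let X be a real symmetric k×k matrix with X ⪰ b·I for some b > 0, let σ > 0, and let w, v ∈ ℝᵏ and λ ∈ ℝ. Then σ²·(v − λw)ᵀ X (v − λw) + ½σ⁴λ² ≥ (b / (2b(1 + ‖w‖²/σ²) + 1)) · ( σ²·‖v‖² + σ⁴·λ² ), where ‖·‖ is the Euclidean norm. -/

import Mathlib

open Matrix

lemma inner_toEuclideanLin_nonneg {k : ℕ} {M : Matrix (Fin k) (Fin k) ℝ}
    (h : M.PosSemidef) (u : EuclideanSpace ℝ (Fin k)) :
    0 ≤ (inner ℝ u (Matrix.toEuclideanLin M u) : ℝ) := by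
  have := h.dotProduct_mulVec_nonneg ((WithLp.equiv 2 _) u)
  simpa [PiLp.inner_apply, Matrix.toEuclideanLin_apply, dotProduct, mul_comm] using this

lemma key_ineq (a n c r t s b : ℝ) (hb : 0 < b) (hs : 0 < s)
    (ha : 0 ≤ a) (hn : 0 ≤ n) (hc : 0 ≤ c) (hr : 0 ≤ r) (ht : 0 ≤ t)
    (hcc : c ^ 2 = t * r * s ^ 2) (htri : n ≤ a + c) :
    b / (2 * b * (1 + r) + 1) * (s ^ 2 * n ^ 2 + s ^ 4 * t)
      ≤ s ^ 2 * (b * a ^ 2) + s ^ 4 * t / 2 := by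
  have hD : 0 < 2 * b * (1 + r) + 1 := by positivity
  rw [div_mul_eq_mul_div, div_le_iff₀ hD]
  have hn2 : n ^ 2 ≤ (a + c) ^ 2 := by nlinarith
  rcases ht.eq_or_lt with h0 | ht'
  · subst h0
    have hc0 : c = 0 := by
      have h2 : c ^ 2 = 0 := by rw [hcc]; ring
      exact pow_eq_zero_iff (two_ne_zero) |>.mp h2
    subst hc0
    have hn2' : n ^ 2 ≤ a ^ 2 := by simpa using hn2
    nlinarith [mul_nonneg (mul_nonneg hb.le (sq_nonneg s)) (sub_nonneg.mpr hn2'),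
      mul_nonneg (mul_nonneg (mul_nonneg hb.le hb.le) (sq_nonneg s)) (sq_nonneg a),
      mul_nonneg (mul_nonneg (mul_nonneg (mul_nonneg hb.le hb.le) hr) (sq_nonneg s)) (sq_nonneg a)]
  · have hcc1 : t * (b * s ^ 2) * (t * r * s ^ 2 - c ^ 2) = 0 := by rw [hcc]; ring
    have hcc2 : b ^ 2 * a ^ 2 * (c ^ 2 - t * r * s ^ 2) = 0 := by rw [hcc]; ring
    nlinarith [sq_nonneg (2 * b * a * c - s ^ 2 * t), hn2, hcc1, hcc2,
      mul_nonneg ht'.le (sq_nonneg (b * s * a)),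
      mul_nonneg (mul_nonneg ht'.le (mul_nonneg hb.le (sq_nonneg s)))
        (sub_nonneg.mpr hn2)]

/-- If `X` is a real symmetric `k×k` matrix with `X ⪰ b·I`, `b > 0`, `σ > 0`,
`w, v ∈ ℝᵏ` and `λ ∈ ℝ`, then
`σ²·(v − λw)ᵀ X (v − λw) + ½σ⁴λ² ≥ (b / (2b(1 + ‖w‖²/σ²) + 1)) · (σ²‖v‖² + σ⁴λ²)`,
with `‖·‖` the Euclidean norm. The quadratic form `uᵀ X u` is written as the real inner
product `⟪u, X u⟫` on `EuclideanSpace ℝ (Fin k)`. -/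
theorem stmt_5 {k : ℕ} (X : Matrix (Fin k) (Fin k) ℝ) (hsym : X.IsSymm)
    (b : ℝ) (hb : 0 < b) (hX : (X - b • (1 : Matrix (Fin k) (Fin k) ℝ)).PosSemidef)
    (σ : ℝ) (hσ : 0 < σ) (w v : EuclideanSpace ℝ (Fin k)) (l : ℝ) :
    (b / (2 * b * (1 + ‖w‖ ^ 2 / σ ^ 2) + 1)) * (σ ^ 2 * ‖v‖ ^ 2 + σ ^ 4 * l ^ 2)
      ≤ σ ^ 2 * (inner ℝ (v - l • w) (Matrix.toEuclideanLin X (v - l • w)) : ℝ)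
        + σ ^ 4 * l ^ 2 / 2 := by
  set u : EuclideanSpace ℝ (Fin k) := v - l • w with hu
  have hpos : 0 ≤ (inner ℝ u (Matrix.toEuclideanLin (X - b • (1 : Matrix (Fin k) (Fin k) ℝ)) u) : ℝ) :=
    inner_toEuclideanLin_nonneg hX u
  have hlin : Matrix.toEuclideanLin (X - b • (1 : Matrix (Fin k) (Fin k) ℝ)) u
      = Matrix.toEuclideanLin X u - b • u := by
    simp [map_sub, _root_.map_smul, Matrix.toEuclideanLin_apply, Matrix.one_mulVec]
  rw [hlin, inner_sub_right, inner_smul_right, real_inner_self_eq_norm_sq] at hpos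
  have hquad : b * ‖u‖ ^ 2 ≤ (inner ℝ u (Matrix.toEuclideanLin X u) : ℝ) := by linarith
  have htri : ‖v‖ ≤ ‖u‖ + |l| * ‖w‖ := by
    have : v = u + l • w := by rw [hu]; abel
    calc ‖v‖ = ‖u + l • w‖ := by rw [← this]
      _ ≤ ‖u‖ + ‖l • w‖ := norm_add_le _ _
      _ = ‖u‖ + |l| * ‖w‖ := by rw [norm_smul, Real.norm_eq_abs]
  have hcc : (|l| * ‖w‖) ^ 2 = l ^ 2 * (‖w‖ ^ 2 / σ ^ 2) * σ ^ 2 := by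
    field_simp [mul_pow, sq_abs]
    rw [sq_abs]; ring
  have hkey := key_ineq ‖u‖ ‖v‖ (|l| * ‖w‖) (‖w‖ ^ 2 / σ ^ 2) (l ^ 2) σ b hb hσ
    (norm_nonneg u) (norm_nonneg v) (by positivity) (by positivity) (sq_nonneg l) hcc htri
  calc (b / (2 * b * (1 + ‖w‖ ^ 2 / σ ^ 2) + 1)) * (σ ^ 2 * ‖v‖ ^ 2 + σ ^ 4 * l ^ 2)
      ≤ σ ^ 2 * (b * ‖u‖ ^ 2) + σ ^ 4 * l ^ 2 / 2 := hkey
    _ ≤ σ ^ 2 * (inner ℝ u (Matrix.toEuclideanLin X u) : ℝ) + σ ^ 4 * l ^ 2 / 2 := by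
        nlinarith [sq_nonneg σ, mul_le_mul_of_nonneg_left hquad (sq_nonneg σ)]
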